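/- Let T > 0 and let v_n (n ∈ ℕ) and v be integrable functions on [0,T] such that v_n converges to v weakly in L¹([0,T]), i.e. ∫₀^T v_n(t) g(t) dt → ∫₀^T v(t) g(t) dt for every bounded measurable g : [0,T] → ℝ. Then for a.e. t ∈ [0,T], liminf_{n→∞} v_n(t) ≤ v(t) ≤ limsup_{n→∞} v_n(t), where the liminf and limsup are taken in the extended reals. -/

import Mathlib

open MeasureTheory Filter

private lemma aux_limsup
    (T : ℝ) (w : ℕ → ℝ → ℝ) (wl : ℝ → ℝ)
    (hwm : ∀ n, Measurable (w n)) (_hwlm : Measurable wl)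
    (hint : ∀ n, Integrable (w n) (volume.restrict (Set.Icc 0 T)))
    (hlint : Integrable wl (volume.restrict (Set.Icc 0 T)))
    (hweak : ∀ g : ℝ → ℝ, Measurable g →
      (∃ C : ℝ, ∀ t ∈ Set.Icc (0:ℝ) T, |g t| ≤ C) →
      Tendsto (fun n => ∫ t in Set.Icc (0:ℝ) T, w n t * g t) atTop
        (nhds (∫ t in Set.Icc (0:ℝ) T, wl t * g t))) :
    ∀ᵐ t ∂(volume.restrict (Set.Icc (0:ℝ) T)),
      (wl t : EReal) ≤ limsup (fun n => (w n t : EReal)) atTop := by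
  set μ := volume.restrict (Set.Icc (0:ℝ) T) with hμ
  set L : ℝ → EReal := fun t => limsup (fun n => (w n t : EReal)) atTop with hLdef
  have hLm : Measurable L :=
    Measurable.limsup fun n => measurable_coe_real_ereal.comp (hwm n)
  set S : ℚ × ℚ → Set ℝ := fun p =>
    {t | L t < (((p.1 : ℝ) : EReal)) ∧ (((p.2 : ℝ) : EReal)) < (wl t : EReal)
      ∧ (p.1 : ℝ) < (p.2 : ℝ)} with hSdef
  have hSm : ∀ p, MeasurableSet (S p) := by
    intro p
    have h1 : MeasurableSet {t | L t < (((p.1 : ℝ) : EReal))} :=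
      hLm measurableSet_Iio
    have h2 : MeasurableSet {t | (((p.2 : ℝ) : EReal)) < (wl t : EReal)} := by
      have : {t | (((p.2 : ℝ) : EReal)) < (wl t : EReal)} = {t | (p.2 : ℝ) < wl t} := by
        ext t; simp [EReal.coe_lt_coe_iff]
      rw [this]
      exact measurableSet_lt measurable_const (_hwlm)
    have h3 : MeasurableSet {t : ℝ | (p.1 : ℝ) < (p.2 : ℝ)} := MeasurableSet.const _
    exact (h1.inter (h2.inter h3))
  have hnull : ∀ p : ℚ × ℚ, μ (S p) = 0 := by
    rintro ⟨q, r⟩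
    by_contra hpos
    have hqr : (q : ℝ) < (r : ℝ) := by
      by_contra h
      apply hpos
      have : S (q, r) = ∅ := by
        ext t; simp only [hSdef, Set.mem_setOf_eq, Set.mem_empty_iff_false, iff_false]
        rintro ⟨-, -, h'⟩; exact h h'
      rw [this]; exact measure_empty
    set B : ℕ → Set ℝ := fun N => S (q, r) ∩ {t | ∀ n, N ≤ n → w n t < (q : ℝ)} with hBdef
    have hBm : ∀ N, MeasurableSet (B N) := by
      intro N
      refine (hSm _).inter ?_
      have : {t | ∀ n, N ≤ n → w n t < (q : ℝ)}
          = ⋂ n, ⋂ _ : N ≤ n, {t | w n t < (q : ℝ)} := by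
        ext t; simp
      rw [this]
      exact MeasurableSet.iInter fun n => MeasurableSet.iInter fun _ =>
        measurableSet_lt (hwm n) measurable_const
    have hUnion : S (q, r) = ⋃ N, B N := by
      ext t
      constructor
      · intro ht
        have hev : ∀ᶠ n in atTop, (w n t : EReal) < (((q : ℝ)) : EReal) :=
          eventually_lt_of_limsup_lt ht.1
        obtain ⟨N, hN⟩ := eventually_atTop.1 hev
        exact Set.mem_iUnion.2 ⟨N, ht, fun n hn => EReal.coe_lt_coe_iff.1 (hN n hn)⟩
      · intro ht
        obtain ⟨N, hN⟩ := Set.mem_iUnion.1 ht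
        exact hN.1
    obtain ⟨N, hBN⟩ : ∃ N, μ (B N) ≠ 0 := by
      by_contra h
      push_neg at h
      exact hpos (hUnion ▸ measure_iUnion_null h)
    set A := B N with hAdef
    have hAm : MeasurableSet A := hBm N
    have hgm : Measurable (A.indicator fun _ => (1 : ℝ)) :=
      measurable_const.indicator hAm
    have hgb : ∃ C : ℝ, ∀ t ∈ Set.Icc (0:ℝ) T, |A.indicator (fun _ => (1 : ℝ)) t| ≤ C := by
      refine ⟨1, fun t _ => ?_⟩
      by_cases h : t ∈ A <;> simp [Set.indicator_apply, h]
    have hconv := hweak _ hgm hgb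
    have key : ∀ f : ℝ → ℝ,
        (∫ t in Set.Icc (0:ℝ) T, f t * A.indicator (fun _ => (1 : ℝ)) t)
          = ∫ t in A, f t ∂μ := by
      intro f
      rw [← integral_indicator hAm]
      congr 1
      ext t
      by_cases h : t ∈ A <;> simp [Set.indicator_apply, h]
    simp_rw [hμ, key] at hconv
    have hμA_lt : μ A < ⊤ := lt_of_le_of_lt (measure_mono (Set.subset_univ _))
      (measure_lt_top μ _)
    have hmpos : 0 < (μ A).toReal := ENNReal.toReal_pos hBN hμA_lt.ne
    have hub : ∀ n, N ≤ n → (∫ t in A, w n t ∂μ) ≤ (q : ℝ) * (μ A).toReal := by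
      intro n hn
      calc ∫ t in A, w n t ∂μ ≤ ∫ _t in A, (q : ℝ) ∂μ := by
            refine setIntegral_mono_on ((hint n).integrableOn)
              (integrableOn_const hμA_lt.ne) hAm ?_
            intro t ht
            exact (ht.2 n hn).le
        _ = (q : ℝ) * (μ A).toReal := by
            rw [setIntegral_const, smul_eq_mul, mul_comm, measureReal_def]
    have hupper : (∫ t in A, wl t ∂μ) ≤ (q : ℝ) * (μ A).toReal :=
      le_of_tendsto hconv (eventually_atTop.2 ⟨N, hub⟩)
    have hlower : (r : ℝ) * (μ A).toReal ≤ ∫ t in A, wl t ∂μ := by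
      calc (r : ℝ) * (μ A).toReal = ∫ _t in A, (r : ℝ) ∂μ := by
            rw [setIntegral_const, smul_eq_mul, mul_comm, measureReal_def]
        _ ≤ ∫ t in A, wl t ∂μ := by
            refine setIntegral_mono_on (integrableOn_const hμA_lt.ne)
              (hlint.integrableOn) hAm ?_
            intro t ht
            exact (EReal.coe_lt_coe_iff.1 ht.1.2.1).le
    have : (r : ℝ) * (μ A).toReal ≤ (q : ℝ) * (μ A).toReal := hlower.trans hupper
    have : (q : ℝ) * (μ A).toReal < (r : ℝ) * (μ A).toReal :=
      mul_lt_mul_of_pos_right hqr hmpos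
    linarith
  rw [ae_iff]
  refine measure_mono_null ?_ (measure_iUnion_null hnull)
  intro t ht
  rw [Set.mem_setOf_eq, not_le] at ht
  obtain ⟨x, hx1, hx2⟩ := EReal.exists_between_coe_real ht
  have hx2' : x < wl t := EReal.coe_lt_coe_iff.1 hx2
  obtain ⟨q, hq1, hq2⟩ := exists_rat_btwn hx2'
  obtain ⟨r, hr1, hr2⟩ := exists_rat_btwn hq2
  refine Set.mem_iUnion.2 ⟨(q, r), ?_, ?_, ?_⟩
  · exact hx1.trans (EReal.coe_lt_coe_iff.2 hq1)
  · exact EReal.coe_lt_coe_iff.2 hr2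
  · exact hr1

/-- A weak `L¹([0,T])` limit lies a.e. between the pointwise `liminf` and
`limsup` (taken in the extended reals) of the sequence. -/
theorem weak_limit_between_liminf_limsup
    (T : ℝ) (hT : 0 < T) (v : ℕ → ℝ → ℝ) (vl : ℝ → ℝ)
    (hvint : ∀ n : ℕ, IntegrableOn (v n) (Set.Icc 0 T))
    (hvlint : IntegrableOn vl (Set.Icc 0 T))
    (hweak : ∀ g : ℝ → ℝ, Measurable g →
      (∃ C : ℝ, ∀ t ∈ Set.Icc (0:ℝ) T, |g t| ≤ C) →
      Tendsto (fun n => ∫ t in Set.Icc (0:ℝ) T, v n t * g t) atTop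
        (nhds (∫ t in Set.Icc (0:ℝ) T, vl t * g t))) :
    ∀ᵐ t ∂(volume.restrict (Set.Icc (0:ℝ) T)),
      liminf (fun n => (v n t : EReal)) atTop ≤ (vl t : EReal) ∧
      (vl t : EReal) ≤ limsup (fun n => (v n t : EReal)) atTop := by
  set μ := volume.restrict (Set.Icc (0:ℝ) T) with hμ
  set w : ℕ → ℝ → ℝ := fun n => AEStronglyMeasurable.mk (v n) (hvint n).1 with hwdef
  set wl : ℝ → ℝ := AEStronglyMeasurable.mk vl hvlint.1 with hwldef
  have hwm : ∀ n, Measurable (w n) := fun n =>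
    ((hvint n).1.stronglyMeasurable_mk).measurable
  have hwlm : Measurable wl := (hvlint.1.stronglyMeasurable_mk).measurable
  have heq : ∀ n, v n =ᵐ[μ] w n := fun n => (hvint n).1.ae_eq_mk
  have heql : vl =ᵐ[μ] wl := hvlint.1.ae_eq_mk
  have hint : ∀ n, Integrable (w n) μ := fun n => (hvint n).congr (heq n)
  have hlint : Integrable wl μ := hvlint.congr heql
  have hweak' : ∀ g : ℝ → ℝ, Measurable g →
      (∃ C : ℝ, ∀ t ∈ Set.Icc (0:ℝ) T, |g t| ≤ C) →
      Tendsto (fun n => ∫ t in Set.Icc (0:ℝ) T, w n t * g t) atTop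
        (nhds (∫ t in Set.Icc (0:ℝ) T, wl t * g t)) := by
    intro g hg hgb
    have h1 : (fun n => ∫ t in Set.Icc (0:ℝ) T, w n t * g t)
        = fun n => ∫ t in Set.Icc (0:ℝ) T, v n t * g t := by
      funext n
      refine integral_congr_ae ?_
      filter_upwards [heq n] with t ht
      rw [ht]
    have h2 : (∫ t in Set.Icc (0:ℝ) T, wl t * g t)
        = ∫ t in Set.Icc (0:ℝ) T, vl t * g t := by
      refine integral_congr_ae ?_
      filter_upwards [heql] with t ht
      rw [ht]
    rw [h1, h2]
    exact hweak g hg hgb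
  have A1 := aux_limsup T w wl hwm hwlm hint hlint hweak'
  have hweakneg : ∀ g : ℝ → ℝ, Measurable g →
      (∃ C : ℝ, ∀ t ∈ Set.Icc (0:ℝ) T, |g t| ≤ C) →
      Tendsto (fun n => ∫ t in Set.Icc (0:ℝ) T, (-(w n t)) * g t) atTop
        (nhds (∫ t in Set.Icc (0:ℝ) T, (-(wl t)) * g t)) := by
    intro g hg hgb
    have := (hweak' g hg hgb).neg
    have h1 : (fun n => -(∫ t in Set.Icc (0:ℝ) T, w n t * g t))
        = fun n => ∫ t in Set.Icc (0:ℝ) T, (-(w n t)) * g t := by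
      funext n
      rw [← integral_neg]
      congr 1
      funext t
      ring
    have h2 : (-(∫ t in Set.Icc (0:ℝ) T, wl t * g t))
        = ∫ t in Set.Icc (0:ℝ) T, (-(wl t)) * g t := by
      rw [← integral_neg]
      congr 1
      funext t
      ring
    rw [h1, h2] at this
    exact this
  have A2 := aux_limsup T (fun n t => -(w n t)) (fun t => -(wl t))
    (fun n => (hwm n).neg) hwlm.neg (fun n => (hint n).neg) hlint.neg hweakneg
  filter_upwards [A1, A2, heql, MeasureTheory.ae_all_iff.2 heq] with t h1 h2 h3 h4
  have hfun : (fun n => (v n t : EReal)) = fun n => (w n t : EReal) := by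
    funext n; rw [h4 n]
  rw [h3, hfun]
  constructor
  · have hcoe : (fun n => ((-(w n t) : ℝ) : EReal)) = -(fun n => (w n t : EReal)) := by
      funext n
      exact EReal.coe_neg _
    rw [hcoe, EReal.limsup_neg] at h2
    have : ((-(wl t) : ℝ) : EReal) = -(wl t : EReal) := EReal.coe_neg _
    rw [this] at h2
    exact EReal.neg_le_neg_iff.1 h2
  · exact h1
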